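/- Let d be a distance on X whose formal-ball lower hemimetric agrees with the lift of the lower hemimetric (i.e., (d₊)̲ = (d̲)₊ on X₊). Define on X₊ the preorder (x,r) ≤ (y,s) iff d(x,y) ≤ r−s, and the strict relation (x,r) < (y,s) iff the upper set of (x,r) is a neighbourhood of (y,s) in the ball topology of (d₊)̲. Then (x,r) < (y,s) if and only if d(x,y) < r − s. -/

import Mathlib

open ENNReal NNReal Filter Set

/-- The formal ball distance `d₊((x,r),(y,s)) = (d x y − r + s)₊`. -/
noncomputable def dPlus {X : Type*} (d : X → X → ℝ≥0∞) (p q : X × ℝ≥0) : ℝ≥0∞ :=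
  (d p.1 q.1 + (q.2 : ℝ≥0∞)) - (p.2 : ℝ≥0∞)

/-- The lower hemimetric of the formal ball distance:
`(d₊)̲(q,q') = ⨆ p, (d₊(p,q') − d₊(p,q))₊`. -/
noncomputable def lowDPlus {X : Type*} (d : X → X → ℝ≥0∞) (q q' : X × ℝ≥0) : ℝ≥0∞ :=
  ⨆ p : X × ℝ≥0, dPlus d p q' - dPlus d p q

/-- The formal ball preorder `(x,r) ≤ (y,s) ↔ d x y ≤ r − s`. -/
def lePlus {X : Type*} (d : X → X → ℝ≥0∞) (p q : X × ℝ≥0) : Prop :=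
  d p.1 q.1 + (q.2 : ℝ≥0∞) ≤ (p.2 : ℝ≥0∞)

/-- The strict relation: `p < q` iff the upper set of `p` is a neighbourhood of `q`
in the ball topology of `(d₊)̲`, i.e. it contains a `(d₊)̲`-ball around `q`. -/
def ltPlus {X : Type*} (d : X → X → ℝ≥0∞) (p q : X × ℝ≥0) : Prop :=
  ∃ ε : ℝ≥0∞, 0 < ε ∧ ∀ q', lowDPlus d q q' < ε → lePlus d p q'

/-- If the lower hemimetric of `d₊` agrees with the lift of the lower hemimetric of
`d`, then `(x,r) < (y,s)` in the formal ball strict order iff `d x y < r − s`. -/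
theorem ltPlus_iff {X : Type*} (d : X → X → ℝ≥0∞)
    (htri : ∀ x y z, d x z ≤ d x y + d y z)
    (hlow : ∀ q q' : X × ℝ≥0,
      lowDPlus d q q' =
        ((⨆ x : X, d x q'.1 - d x q.1) + (q'.2 : ℝ≥0∞)) - (q.2 : ℝ≥0∞)) :
    ∀ p q : X × ℝ≥0, ltPlus d p q ↔ d p.1 q.1 + (q.2 : ℝ≥0∞) < (p.2 : ℝ≥0∞) := by
  intro p q
  obtain ⟨x, r⟩ := p
  obtain ⟨y, s⟩ := q
  constructor
  · rintro ⟨ε, hε, h⟩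
    obtain ⟨δ, hδ0, hδε⟩ := ENNReal.lt_iff_exists_nnreal_btwn.mp hε
    have hδ0' : (0 : ℝ≥0∞) < δ := hδ0
    have hq' : lowDPlus d (y, s) (y, s + δ) < ε := by
      rw [hlow]
      have h0 : (⨆ z : X, d z y - d z y) = 0 := by simp
      simp only [h0, zero_add]
      have : ((s + δ : ℝ≥0) : ℝ≥0∞) - (s : ℝ≥0∞) = (δ : ℝ≥0∞) := by
        push_cast
        rw [add_comm]
        exact ENNReal.add_sub_cancel_right ENNReal.coe_ne_top
      rw [this]
      exact hδε
    have hle := h (y, s + δ) hq'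
    unfold lePlus at hle
    simp only at hle
    push_cast at hle
    rw [← add_assoc] at hle
    have hfin : d x y + (s : ℝ≥0∞) ≠ ∞ := by
      intro he
      rw [he] at hle
      simp at hle
    calc d x y + (s : ℝ≥0∞) < d x y + s + δ := by
          exact ENNReal.lt_add_right hfin (by exact_mod_cast hδ0'.ne')
      _ ≤ r := hle
  · intro h
    refine ⟨(r : ℝ≥0∞) - (d x y + s), tsub_pos_of_lt h, ?_⟩
    rintro ⟨y', s'⟩ hlt
    rw [hlow] at hlt
    simp only at hlt
    unfold lePlus
    simp only
    have hdfin : d x y ≠ ∞ := fun he => by simp [he] at h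
    have hA : (d x y' - d x y) + (s' : ℝ≥0∞) - s < (r : ℝ≥0∞) - (d x y + s) :=
      lt_of_le_of_lt (tsub_le_tsub_right
        (add_le_add_left (le_iSup (fun z => d z y' - d z y) x) _) _) hlt
    have h1 : (d x y' - d x y) + (s' : ℝ≥0∞) < ((r : ℝ≥0∞) - (d x y + s)) + s :=
      lt_of_le_of_lt le_tsub_add (ENNReal.add_lt_add_right ENNReal.coe_ne_top hA)
    have hle' : d x y + (s : ℝ≥0∞) ≤ r := h.le
    have hs : (s : ℝ≥0∞) ≤ (r : ℝ≥0∞) - d x y := ENNReal.le_sub_of_add_le_left hdfin hle'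
    have heq : ((r : ℝ≥0∞) - (d x y + s)) + s = (r : ℝ≥0∞) - d x y := by
      rw [tsub_add_eq_tsub_tsub, tsub_add_cancel_of_le hs]
    rw [heq] at h1
    have hdr : d x y ≤ (r : ℝ≥0∞) := le_trans le_self_add hle'
    have h2 : (d x y' - d x y) + (s' : ℝ≥0∞) + d x y < r := by
      calc (d x y' - d x y) + (s' : ℝ≥0∞) + d x y
          < ((r : ℝ≥0∞) - d x y) + d x y := ENNReal.add_lt_add_right hdfin h1
        _ = r := tsub_add_cancel_of_le hdr
    calc d x y' + (s' : ℝ≥0∞) ≤ (d x y + (d x y' - d x y)) + s' :=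
          add_le_add_left le_add_tsub _
      _ = (d x y' - d x y) + (s' : ℝ≥0∞) + d x y := by ring
      _ ≤ r := h2.le
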